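/- Let p be a prime and n = p^s·m with s > 0 and p ∤ m. If p^s divides Γ(m), then there exists a finite group G of order n whose largest normal p-subgroup is trivial, i.e., O_p(G) = 1. -/

import Mathlib

open Matrix

/-- `gam t q = (q^t - 1)(q^(t-1) - 1) ⋯ (q^2 - 1)(q - 1)`, with `gam 0 q = 1`. -/
def gam (t q : ℕ) : ℕ := ∏ i ∈ Finset.range t, (q ^ (i + 1) - 1)

/-- `Gam m = γ(t_1,q_1)⋯γ(t_k,q_k)` where `m = q_1^{t_1}⋯q_k^{t_k}` is the prime
factorization of `m` (so `Gam 1 = 1`). -/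
def Gam (m : ℕ) : ℕ := m.factorization.prod fun q t => gam t q

/-- Componentwise `GL` action as additive automorphisms of a product vector space. -/
def piGLAddAut {ι : Type} {n : ι → Type} [∀ i, Fintype (n i)] [∀ i, DecidableEq (n i)]
    {R : ι → Type} [∀ i, CommRing (R i)] :
    (∀ i, GL (n i) (R i)) →* Multiplicative (AddAut (∀ i, n i → R i)) where
  toFun x := Multiplicative.ofAdd
    { toFun := fun v i => (x i : Matrix (n i) (n i) (R i)) *ᵥ v i
      invFun := fun v i => ((x i)⁻¹ : GL (n i) (R i)) *ᵥ v i
      left_inv := fun v => funext fun i => by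
        simp only [Matrix.mulVec_mulVec]
        rw [← Matrix.GeneralLinearGroup.coe_mul, inv_mul_cancel,
          Matrix.GeneralLinearGroup.coe_one, Matrix.one_mulVec]
      right_inv := fun v => funext fun i => by
        simp only [Matrix.mulVec_mulVec]
        rw [← Matrix.GeneralLinearGroup.coe_mul, mul_inv_cancel,
          Matrix.GeneralLinearGroup.coe_one, Matrix.one_mulVec]
      map_add' := fun v w => funext fun i => by simp [Matrix.mulVec_add] }
  map_one' := Multiplicative.toAdd.injective (AddEquiv.ext fun v => funext fun i => by simp)
  map_mul' x y := Multiplicative.toAdd.injective (AddEquiv.ext fun v => funext fun i => by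
    simp [Matrix.mulVec_mulVec])

theorem piGLAddAut_apply {ι : Type} {n : ι → Type} [∀ i, Fintype (n i)] [∀ i, DecidableEq (n i)]
    {R : ι → Type} [∀ i, CommRing (R i)] (x : ∀ i, GL (n i) (R i)) (v : ∀ i, n i → R i) (i : ι) :
    Multiplicative.toAdd (piGLAddAut x) v i = (x i : Matrix (n i) (n i) (R i)) *ᵥ v i := rfl

/-- `AddAut A →* MulAut (Multiplicative A)`. -/
def addAutToMulAut (A : Type) [AddGroup A] : Multiplicative (AddAut A) →* MulAut (Multiplicative A) where
  toFun e := AddEquiv.toMultiplicative e.toAdd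
  map_one' := MulEquiv.ext fun _ => rfl
  map_mul' _ _ := MulEquiv.ext fun _ => rfl

def sdpEquivProd {N G : Type} [Group N] [Group G] (φ : G →* MulAut N) :
    (N ⋊[φ] G) ≃ N × G :=
  ⟨fun g => (g.left, g.right), fun p => ⟨p.1, p.2⟩, fun _ => rfl, fun _ => rfl⟩

theorem natCard_sdp {N G : Type} [Group N] [Group G] (φ : G →* MulAut N) :
    Nat.card (N ⋊[φ] G) = Nat.card N * Nat.card G := by
  rw [Nat.card_congr (sdpEquivProd φ), Nat.card_prod]

theorem gam_dvd_card_GL (t : ℕ) (F : Type) [Field F] [Fintype F] :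
    gam t (Fintype.card F) ∣ Nat.card (GL (Fin t) F) := by
  rw [Matrix.card_GL_field]
  set q := Fintype.card F with hq
  rw [Fin.prod_univ_eq_prod_range (fun i => q ^ t - q ^ i) t]
  unfold gam
  rw [← Finset.prod_range_reflect]
  apply Finset.prod_dvd_prod_of_dvd
  intro i hi
  simp only [Finset.mem_range] at hi
  have he : t - 1 - i + 1 = t - i := by omega
  rw [he]
  refine ⟨q ^ i, ?_⟩
  have h2 : (q ^ (t - i) - 1) * q ^ i = q ^ (t - i) * q ^ i - q ^ i := by
    rw [Nat.sub_mul, one_mul]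
  rw [h2, ← pow_add]
  congr 2
  omega

theorem gl_eq_one_of_mulVec {n R : Type} [Fintype n] [DecidableEq n] [CommRing R]
    (x : GL n R) (h : ∀ v : n → R, (x : Matrix n n R) *ᵥ v = v) : x = 1 := by
  apply Matrix.GeneralLinearGroup.ext
  intro i j
  have h1 := congrFun (h (Pi.single j 1)) i
  simp only [Matrix.mulVec_single_one, Matrix.col_apply] at h1
  rw [h1, Matrix.GeneralLinearGroup.coe_one, Matrix.one_apply, Pi.single_apply]

theorem exists_group_pCore_trivial (p s m : ℕ) (hp : p.Prime) (hs : 0 < s)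
    (hpm : ¬ p ∣ m) (hdvd : p ^ s ∣ Gam m) :
    ∃ (G : Type) (_ : Group G) (_ : Finite G), Nat.card G = p ^ s * m ∧
      ∀ N : Subgroup G, N.Normal → IsPGroup p N → N = ⊥ := by
  classical
  have hm0 : m ≠ 0 := by rintro rfl; exact hpm (dvd_zero p)
  haveI : Fact p.Prime := ⟨hp⟩
  haveI instFact : ∀ q : ↥m.primeFactors, Fact (Nat.Prime (q : ℕ)) :=
    fun q => ⟨Nat.prime_of_mem_primeFactors q.2⟩
  haveI instNeZero : ∀ q : ↥m.primeFactors, NeZero ((q : ℕ)) :=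
    fun q => ⟨(instFact q).out.pos.ne'⟩
  set t : ↥m.primeFactors → ℕ := fun q => m.factorization (q : ℕ) with ht
  set V : Type := ∀ q : ↥m.primeFactors, Fin (t q) → ZMod (q : ℕ) with hV
  set H : Type := ∀ q : ↥m.primeFactors, GL (Fin (t q)) (ZMod (q : ℕ)) with hH
  -- cardinality of V
  have hcardV : Nat.card V = m := by
    rw [hV, Nat.card_pi]
    have h1 : ∀ q : ↥m.primeFactors,
        Nat.card (Fin (t q) → ZMod (q : ℕ)) = (q : ℕ) ^ t q := by
      intro q
      rw [Nat.card_pi, Finset.prod_const, Nat.card_zmod, Finset.card_univ, Fintype.card_fin]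
    rw [Finset.prod_congr rfl fun q _ => h1 q]
    have h2 := Nat.factorization_prod_pow_eq_self hm0
    rw [Finsupp.prod, Nat.support_factorization] at h2
    rw [Finset.prod_coe_sort m.primeFactors (fun q => q ^ m.factorization q)]
    exact h2
  -- p ^ s divides the cardinality of H
  have hGam : Gam m = ∏ q : ↥m.primeFactors, gam (t q) (q : ℕ) := by
    rw [Gam, Finsupp.prod, Nat.support_factorization,
      ← Finset.prod_coe_sort m.primeFactors (fun q => gam (m.factorization q) q)]
  have hdvdH : p ^ s ∣ Nat.card H := by
    refine dvd_trans hdvd ?_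
    rw [hGam, hH, Nat.card_pi]
    apply Finset.prod_dvd_prod_of_dvd
    intro q _
    have h3 := gam_dvd_card_GL (t q) (ZMod (q : ℕ))
    rwa [ZMod.card] at h3
  -- a p-subgroup of H of order p^s
  obtain ⟨P, hP⟩ := Sylow.exists_subgroup_card_pow_prime p hdvdH
  set ψ : ↥P →* MulAut (Multiplicative V) :=
    ((addAutToMulAut V).comp piGLAddAut).comp P.subtype with hψ
  refine ⟨Multiplicative V ⋊[ψ] ↥P, inferInstance,
    Finite.of_equiv _ (sdpEquivProd ψ).symm, ?_, ?_⟩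
  · rw [natCard_sdp, Nat.card_congr (Multiplicative.toAdd (α := V)), hcardV, hP, mul_comm]
  intro N hN hNp
  have hcop : Nat.Coprime p m := (Nat.Prime.coprime_iff_not_dvd hp).mpr hpm
  have key : ∀ g : Multiplicative V ⋊[ψ] ↥P, g ∈ N → g.right = 1 → g = 1 := by
    intro g hg hgr
    obtain ⟨k, hk⟩ := hNp ⟨g, hg⟩
    have hk' : g ^ p ^ k = 1 := by
      have h4 := congrArg Subtype.val hk
      simpa using h4
    have h1 : orderOf g ∣ p ^ k := orderOf_dvd_of_pow_eq_one hk'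
    have hgl : SemidirectProduct.inl g.left = g := by
      conv_rhs => rw [← SemidirectProduct.inl_left_mul_inr_right g]
      rw [hgr, _root_.map_one, mul_one]
    have h2 : orderOf g ∣ m := by
      rw [← hgl, orderOf_injective SemidirectProduct.inl SemidirectProduct.inl_injective g.left]
      have h3 : orderOf g.left ∣ Nat.card (Multiplicative V) := orderOf_dvd_natCard _
      rwa [Nat.card_congr (Multiplicative.toAdd (α := V)), hcardV] at h3
    have h4 : orderOf g = 1 :=
      Nat.eq_one_of_dvd_one ((hcop.pow_left k) ▸ Nat.dvd_gcd h1 h2)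
    exact orderOf_eq_one_iff.mp h4
  rw [Subgroup.eq_bot_iff_forall]
  intro n hn
  have hfix : ∀ w : Multiplicative V, ψ n.right w = w := by
    intro w
    have hmem : n * SemidirectProduct.inl w * n⁻¹ * (SemidirectProduct.inl w)⁻¹ ∈ N := by
      have h5 : SemidirectProduct.inl w * n⁻¹ * (SemidirectProduct.inl w)⁻¹ ∈ N :=
        hN.conj_mem _ (N.inv_mem hn) _
      have h6 := N.mul_mem hn h5
      rw [show n * SemidirectProduct.inl w * n⁻¹ * (SemidirectProduct.inl w)⁻¹
        = n * (SemidirectProduct.inl w * n⁻¹ * (SemidirectProduct.inl w)⁻¹) by group]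
      exact h6
    have hr : (n * SemidirectProduct.inl w * n⁻¹ * (SemidirectProduct.inl w)⁻¹).right = 1 := by
      simp [SemidirectProduct.mul_right, SemidirectProduct.inv_right, SemidirectProduct.right_inl]
    have h7 := key _ hmem hr
    rw [mul_inv_eq_one] at h7
    have h8 : n * SemidirectProduct.inl w = SemidirectProduct.inl w * n := by
      calc n * SemidirectProduct.inl w = n * SemidirectProduct.inl w * n⁻¹ * n := by group
        _ = SemidirectProduct.inl w * n := by rw [h7]
    have h10 := congrArg SemidirectProduct.left h8
    simp only [SemidirectProduct.mul_left, SemidirectProduct.left_inl,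
      SemidirectProduct.right_inl, _root_.map_one, MulAut.one_apply] at h10
    have h11 : n.left * ψ n.right w = n.left * w := by rw [h10]; exact mul_comm w n.left
    exact mul_left_cancel h11
  have hx : (P.subtype n.right : H) = 1 := by
    refine funext fun q => ?_
    have hq1 : (1 : H) q = 1 := rfl
    rw [hq1]
    refine gl_eq_one_of_mulVec _ fun u => ?_
    have h12 : Multiplicative.toAdd (piGLAddAut (P.subtype n.right)) (Function.update (0 : V) q u)
        = Function.update (0 : V) q u :=
      hfix (Multiplicative.ofAdd (Function.update (0 : V) q u))
    have h13 := congrFun h12 q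
    rw [piGLAddAut_apply, Function.update_self] at h13
    exact h13
  have hx1 : n.right = 1 := by
    have h14 : P.subtype n.right = P.subtype 1 := by simpa using hx
    exact P.subtype_injective h14
  exact key n hn hx1
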